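/- Let (X,‖·‖,⪯) be a reflexive Banach space endowed with a partial order ⪯ whose order intervals are closed and convex and whose norm distance is left-monotone, and let M be a nonempty bounded closed subset of X. Let φ : M → ℝ₊ be lower weakly semi-continuous, and let T : M → WK(M) be a set-valued map with nonempty weakly compact values such that for every x ∈ M there exists a ∈ T(x) with x ⪯ a and ‖x − a‖ ≤ φ(x) − inf φ(T(x) ∩ [x,a]). Then there exists x* ∈ M with x* ∈ T(x*). -/

import Mathlib

open Filter Topology

set_option linter.unusedSectionVars false
set_option linter.unusedVariables false
set_option linter.unusedTactic false

section CaristiHelpers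

variable {X : Type*} [NormedAddCommGroup X] [NormedSpace ℝ X]


variable {X : Type*} [NormedAddCommGroup X] [NormedSpace ℝ X]

lemma eval_weak_cont (f : X →L[ℝ] ℝ) :
    Continuous fun w : WeakSpace ℝ X => f ((toWeakSpace ℝ X).symm w) :=
  WeakBilin.eval_continuous _ f

lemma weak_closed_of_closed_convex {C : Set X} (hcl : IsClosed C) (hcv : Convex ℝ C) :
    IsClosed (toWeakSpace ℝ X '' C) := by
  rw [← isOpen_compl_iff, isOpen_iff_mem_nhds]
  intro w hw
  have hx : (toWeakSpace ℝ X).symm w ∉ C := by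
    intro h
    exact hw ⟨_, h, by simp⟩
  obtain ⟨f, u, hfu, hfC⟩ := geometric_hahn_banach_point_closed hcv hcl hx
  have hopen : IsOpen {v : WeakSpace ℝ X | f ((toWeakSpace ℝ X).symm v) < u} :=
    isOpen_lt (eval_weak_cont f) continuous_const
  refine Filter.mem_of_superset (hopen.mem_nhds hfu) ?_
  rintro v hv ⟨y, hy, rfl⟩
  have : u < f y := hfC y hy
  simp only [Set.mem_setOf_eq] at hv
  rw [LinearEquiv.symm_apply_apply] at hv
  linarith

/-- cluster point extraction in a weakly compact set -/
lemma exists_weak_clusterPt {Q : Set X} (hQ : IsCompact (toWeakSpace ℝ X '' Q))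
    (u : ℕ → X) (hu : ∀ k, u k ∈ Q) :
    ∃ z ∈ Q, MapClusterPt (toWeakSpace ℝ X z) atTop (fun k => toWeakSpace ℝ X (u k)) := by
  have hle : Filter.map (fun k => toWeakSpace ℝ X (u k)) atTop ≤ 𝓟 (toWeakSpace ℝ X '' Q) := by
    rw [Filter.le_principal_iff]
    exact Filter.mem_map.mpr (Filter.Eventually.of_forall fun k => ⟨u k, hu k, rfl⟩)
  obtain ⟨w, hwQ, hwc⟩ := hQ.exists_clusterPt hle
  obtain ⟨z, hz, rfl⟩ := hwQ
  exact ⟨z, hz, hwc⟩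

/-- a weak cluster point of a sequence in a closed convex set lies in that set -/
lemma mem_of_weak_clusterPt {C : Set X} (hcl : IsClosed C) (hcv : Convex ℝ C)
    {u : ℕ → X} (hu : ∀ k, u k ∈ C) {z : X}
    (hz : MapClusterPt (toWeakSpace ℝ X z) atTop (fun k => toWeakSpace ℝ X (u k))) :
    z ∈ C := by
  have h1 : ClusterPt (toWeakSpace ℝ X z) (𝓟 (toWeakSpace ℝ X '' C)) := by
    refine hz.clusterPt.mono ?_
    rw [Filter.le_principal_iff]
    exact Filter.mem_map.mpr (Filter.Eventually.of_forall fun k => ⟨u k, hu k, rfl⟩)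
  have h2 : toWeakSpace ℝ X z ∈ closure (toWeakSpace ℝ X '' C) :=
    mem_closure_iff_clusterPt.mpr h1
  rw [(weak_closed_of_closed_convex hcl hcv).closure_eq] at h2
  obtain ⟨y, hy, hyz⟩ := h2
  rwa [← (toWeakSpace ℝ X).injective hyz]

/-- evaluation of a cluster point along a convergent functional sequence -/
lemma clusterPt_eval_eq {z : X} {u : ℕ → X}
    (hz : MapClusterPt (toWeakSpace ℝ X z) atTop (fun k => toWeakSpace ℝ X (u k)))
    (f : X →L[ℝ] ℝ) {c : ℝ} (hc : Tendsto (fun k => f (u k)) atTop (𝓝 c)) :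
    f z = c := by
  have h1 : MapClusterPt (f z) atTop (fun k => f (u k)) := by
    have := hz.continuousAt_comp (f := fun w : WeakSpace ℝ X => f ((toWeakSpace ℝ X).symm w))
      (eval_weak_cont f).continuousAt
    simpa [Function.comp_def] using this
  have h2 : Filter.map (fun k => f (u k)) atTop ≤ 𝓝 c := hc
  have : ClusterPt (f z) (𝓝 c) := h1.clusterPt.mono h2
  exact eq_of_nhds_neBot this

/-- norming lemma: if `z` is in the closure of the range of `d`, each `f j` norms `d j`
with `‖f j‖ ≤ 1`, and all `f j` vanish at `z`, then `z = 0`. -/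
lemma eq_zero_of_norming {d : ℕ → X} {f : ℕ → X →L[ℝ] ℝ}
    (hf1 : ∀ j, ‖f j‖ ≤ 1) (hf2 : ∀ j, f j (d j) = ‖d j‖)
    {z : X} (hz : z ∈ closure (Set.range d)) (h0 : ∀ j, f j z = 0) : z = 0 := by
  rw [← norm_le_zero_iff]
  refine le_of_forall_pos_le_add fun ε hε => ?_
  obtain ⟨y, ⟨j, rfl⟩, hy⟩ := Metric.mem_closure_iff.mp hz (ε/2) (by linarith)
  have h1 : ‖z‖ ≤ ‖d j‖ + ε/2 := by
    have := norm_sub_norm_le z (d j)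
    rw [dist_eq_norm] at hy
    linarith [abs_le.mp (abs_norm_sub_norm_le z (d j))]
  have h2 : (‖d j‖ : ℝ) = f j (d j - z) := by
    rw [map_sub, h0 j, hf2 j]; ring
  have h3 : f j (d j - z) ≤ ‖d j - z‖ := by
    calc f j (d j - z) ≤ ‖f j (d j - z)‖ := le_abs_self _
    _ ≤ ‖f j‖ * ‖d j - z‖ := (f j).le_opNorm _
    _ ≤ 1 * ‖d j - z‖ := by
        exact mul_le_mul_of_nonneg_right (hf1 j) (norm_nonneg _)
    _ = ‖d j - z‖ := one_mul _
  have h4 : ‖d j - z‖ < ε/2 := by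
    rw [dist_eq_norm] at hy
    rwa [norm_sub_rev]
  linarith

/-- **sequential weak compactness** of weakly compact sets. -/
lemma weak_seq_extract {Q : Set X} (hQ : IsCompact (toWeakSpace ℝ X '' Q))
    (b : ℕ → X) (hb : ∀ k, b k ∈ Q) :
    ∃ z ∈ Q, ∃ σ : ℕ → ℕ, StrictMono σ ∧
      ∀ f : X →L[ℝ] ℝ, Tendsto (fun k => f (b (σ k))) atTop (𝓝 (f z)) := by
  -- separable closed subspace containing the sequence
  set S : Submodule ℝ X := Submodule.span ℝ (Set.range b) with hS
  set Y : Set X := closure (S : Set X) with hYdef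
  have hYsep : TopologicalSpace.IsSeparable Y :=
    ((Set.countable_range b).isSeparable.span).closure
  have hYcl : IsClosed Y := isClosed_closure
  have hYcv : Convex ℝ Y := (Submodule.convex S).closure
  have hbY : ∀ k, b k ∈ Y :=
    fun k => subset_closure (Submodule.subset_span (Set.mem_range_self k))
  have h0Y : (0 : X) ∈ Y := subset_closure (Submodule.zero_mem S)
  obtain ⟨c, hc_count, hc_dense⟩ := hYsep
  have hc_ne : c.Nonempty := by
    rcases Set.eq_empty_or_nonempty c with h | h
    · exfalso; have := hc_dense h0Y; rw [h, closure_empty] at this; exact this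
    · exact h
  obtain ⟨d, hd⟩ := Set.Countable.exists_eq_range hc_count hc_ne
  have hYd : Y ⊆ closure (Set.range d) := by rw [← hd]; exact hc_dense
  -- norming functionals
  have hfex : ∀ j : ℕ, ∃ f : X →L[ℝ] ℝ, ‖f‖ ≤ 1 ∧ f (d j) = ‖d j‖ :=
    fun j => exists_dual_vector'' ℝ (d j)
  choose f hf1 hf2 using hfex
  -- each image f j '' Q is compact in ℝ
  have himg : ∀ j, IsCompact ((fun x => f j x) '' Q) := by
    intro j
    have : ((fun x => f j x) '' Q)
        = (fun w : WeakSpace ℝ X => f j ((toWeakSpace ℝ X).symm w)) '' (toWeakSpace ℝ X '' Q) := by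
      rw [Set.image_image]
      simp
    rw [this]
    exact hQ.image (eval_weak_cont (f j))
  -- diagonal extraction via the compact metrizable product
  set P : Set (ℕ → ℝ) := Set.pi Set.univ (fun j => (fun x => f j x) '' Q) with hP
  have hPc : IsCompact P := isCompact_univ_pi himg
  have hmem : ∀ k, (fun j => f j (b k)) ∈ P :=
    fun k => fun j _ => ⟨b k, hb k, rfl⟩
  obtain ⟨g, hgP, σ, hσ, hσg⟩ := hPc.tendsto_subseq hmem
  have hcoord : ∀ j, Tendsto (fun k => f j (b (σ k))) atTop (𝓝 (g j)) := by
    intro j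
    have := (continuous_apply j).continuousAt.tendsto.comp hσg
    simpa [Function.comp_def] using this
  -- the weak cluster point of the subsequence
  obtain ⟨z, hzQ, hzc⟩ := exists_weak_clusterPt hQ (fun k => b (σ k)) (fun k => hb _)
  have hzY : z ∈ Y := mem_of_weak_clusterPt hYcl hYcv (fun k => hbY _) hzc
  have hzg : ∀ j, f j z = g j := fun j => clusterPt_eval_eq hzc (f j) (hcoord j)
  refine ⟨z, hzQ, σ, hσ, ?_⟩
  intro F
  by_contra hnot
  -- find a subsequence on which `F` stays away from `F z`
  have hFQ : IsCompact ((fun x => F x) '' Q) := by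
    have : ((fun x => F x) '' Q)
        = (fun w : WeakSpace ℝ X => F ((toWeakSpace ℝ X).symm w)) '' (toWeakSpace ℝ X '' Q) := by
      rw [Set.image_image]; simp
    rw [this]
    exact hQ.image (eval_weak_cont F)
  rw [Metric.tendsto_atTop] at hnot
  push_neg at hnot
  obtain ⟨ε, hε, hfreq⟩ := hnot
  have hfreq' : ∀ N, ∃ n > N, ε ≤ dist (F (b (σ n))) (F z) := by
    intro N
    obtain ⟨n, hn, hd⟩ := hfreq (N + 1)
    exact ⟨n, lt_of_lt_of_le (Nat.lt_succ_self N) hn, hd⟩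
  obtain ⟨τ₀, hτ₀, hτ₀p⟩ := Nat.exists_strictMono_subsequence hfreq'
  have hmem2 : ∀ i, F (b (σ (τ₀ i))) ∈ (fun x => F x) '' Q := fun i => ⟨_, hb _, rfl⟩
  obtain ⟨dd, hddQ, τ₁, hτ₁, hτ₁t⟩ := hFQ.tendsto_subseq hmem2
  have hddne : dd ≠ F z := by
    intro h
    have : Tendsto (fun i => dist (F (b (σ (τ₀ (τ₁ i))))) (F z)) atTop (𝓝 0) := by
      rw [← h]
      have := hτ₁t
      rw [tendsto_iff_dist_tendsto_zero] at this
      simpa [Function.comp] using this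
    have hker : ∀ i, ε ≤ dist (F (b (σ (τ₀ (τ₁ i))))) (F z) := fun i => hτ₀p (τ₁ i)
    have := le_of_tendsto_of_tendsto' tendsto_const_nhds this hker
    linarith
  -- cluster point of the sub-subsequence
  set ρ : ℕ → ℕ := fun i => σ (τ₀ (τ₁ i)) with hρ
  obtain ⟨z', hz'Q, hz'c⟩ := exists_weak_clusterPt hQ (fun i => b (ρ i)) (fun i => hb _)
  have hz'Y : z' ∈ Y := mem_of_weak_clusterPt hYcl hYcv (fun i => hbY _) hz'c
  have hz'g : ∀ j, f j z' = g j := by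
    intro j
    refine clusterPt_eval_eq hz'c (f j) ?_
    have htend : Tendsto (fun i => τ₀ (τ₁ i)) atTop atTop :=
      (hτ₀.comp hτ₁).tendsto_atTop
    exact (hcoord j).comp htend
  have hz'F : F z' = dd := by
    refine clusterPt_eval_eq hz'c F ?_
    simpa [Function.comp_def] using hτ₁t
  -- the two cluster points agree, contradiction
  have hzz' : z - z' ∈ Y := by
    have hcoe : (S.topologicalClosure : Set X) = Y := by
      rw [hYdef]; rfl
    rw [← hcoe] at hzY hz'Y ⊢
    exact Submodule.sub_mem _ hzY hz'Y
  have h0 : ∀ j, f j (z - z') = 0 := by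
    intro j
    rw [map_sub, hzg j, hz'g j, sub_self]
  have : z - z' = 0 := eq_zero_of_norming hf1 hf2 (hYd hzz') h0
  have hzeq : z = z' := by rwa [sub_eq_zero] at this
  rw [hzeq, hz'F] at hddne
  exact hddne rfl

section Main

variable [CompleteSpace X] [PartialOrder X]

/-- exact Caristi successor -/
lemma exists_exact_successor
    (h_Ici_closed : ∀ a : X, IsClosed (Set.Ici a))
    (h_Iic_closed : ∀ a : X, IsClosed (Set.Iic a))
    (h_Ici_convex : ∀ a : X, Convex ℝ (Set.Ici a))
    (h_Iic_convex : ∀ a : X, Convex ℝ (Set.Iic a))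
    (h_left_monotone : ∀ x y z : X, x ≤ y → y ≤ z → ‖x - y‖ ≤ ‖x - z‖)
    (M : Set X) (φ : X → ℝ) (hφ_nonneg : ∀ x ∈ M, 0 ≤ φ x)
    (hφ_lwsc : ∀ (x : ℕ → X), (∀ n, x n ∈ M) → ∀ a ∈ M,
      (∀ f : X →L[ℝ] ℝ, Tendsto (fun n => f (x n)) atTop (𝓝 (f a))) →
      φ a ≤ liminf (fun n => φ (x n)) atTop)
    (T : X → Set X)
    (hT_sub : ∀ x ∈ M, T x ⊆ M)
    (hT_wcpt : ∀ x ∈ M, IsCompact ((toWeakSpace ℝ X) '' (T x)))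
    (hcaristi : ∀ x ∈ M, ∃ a ∈ T x, x ≤ a ∧
      ‖x - a‖ ≤ φ x - sInf (φ '' (T x ∩ Set.Icc x a)))
    {x : X} (hx : x ∈ M) :
    ∃ b ∈ T x, x ≤ b ∧ ‖x - b‖ ≤ φ x - φ b := by
  obtain ⟨a, haT, hxa, hna⟩ := hcaristi x hx
  set K := T x ∩ Set.Icc x a with hK
  have haK : a ∈ K := ⟨haT, hxa, le_refl a⟩
  have hKM : K ⊆ M := Set.Subset.trans Set.inter_subset_left (hT_sub x hx)
  have hbdd : BddBelow (φ '' K) := by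
    refine ⟨0, ?_⟩
    rintro y ⟨u, hu, rfl⟩
    exact hφ_nonneg u (hKM hu)
  set L := sInf (φ '' K) with hL
  have hLle : ∀ u ∈ K, L ≤ φ u := fun u hu => csInf_le hbdd ⟨u, hu, rfl⟩
  have hch : ∀ k : ℕ, ∃ u ∈ K, φ u < L + 1/(k+1) := by
    intro k
    have hlt : L < L + 1/(k+1) := by
      have : (0:ℝ) < 1/(k+1) := by positivity
      linarith
    obtain ⟨y, ⟨u, hu, rfl⟩, hy⟩ :=
      exists_lt_of_csInf_lt (Set.Nonempty.image φ ⟨a, haK⟩) hlt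
    exact ⟨u, hu, hy⟩
  choose v hvK hvφ using hch
  -- weak compactness of K
  have hIcc_cl : IsClosed (Set.Icc x a) := by
    rw [← Set.Ici_inter_Iic]
    exact (h_Ici_closed x).inter (h_Iic_closed a)
  have hIcc_cv : Convex ℝ (Set.Icc x a) := by
    rw [← Set.Ici_inter_Iic]
    exact (h_Ici_convex x).inter (h_Iic_convex a)
  have hK_cpt : IsCompact (toWeakSpace ℝ X '' K) := by
    have himg : toWeakSpace ℝ X '' K
        = (toWeakSpace ℝ X '' T x) ∩ (toWeakSpace ℝ X '' Set.Icc x a) :=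
      Set.image_inter (toWeakSpace ℝ X).injective
    rw [himg]
    exact (hT_wcpt x hx).inter_right (weak_closed_of_closed_convex hIcc_cl hIcc_cv)
  obtain ⟨z, hzK, σ, hσ, hzt⟩ := weak_seq_extract hK_cpt v hvK
  -- φ z ≤ L
  have hφv : Tendsto (fun k => φ (v (σ k))) atTop (𝓝 L) := by
    have hup : Tendsto (fun k : ℕ => L + 1/(k+1)) atTop (𝓝 L) := by
      have h2 := (tendsto_const_nhds (x := L) (f := (atTop : Filter ℕ))).add
        tendsto_one_div_add_atTop_nhds_zero_nat
      simpa using h2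
    refine tendsto_of_tendsto_of_tendsto_of_le_of_le tendsto_const_nhds hup
      (fun k => hLle _ (hvK (σ k))) ?_
    intro k
    have h1 : φ (v (σ k)) < L + 1/(σ k + 1) := hvφ (σ k)
    have h2 : (1:ℝ)/(σ k + 1) ≤ 1/(k+1) := by
      apply one_div_le_one_div_of_le
      · positivity
      · have hk : k ≤ σ k := hσ.le_apply
        have : (k:ℝ) ≤ (σ k : ℝ) := Nat.cast_le.mpr hk
        linarith
    linarith
  have hzM : z ∈ M := hKM hzK
  have hφz : φ z ≤ L := by
    have h := hφ_lwsc (fun k => v (σ k)) (fun k => hKM (hvK (σ k))) z hzM hzt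
    rwa [hφv.liminf_eq] at h
  refine ⟨z, hzK.1, hzK.2.1, ?_⟩
  have h1 : ‖x - z‖ ≤ ‖x - a‖ := h_left_monotone x z a hzK.2.1 hzK.2.2
  linarith [hna]

end Main


end CaristiHelpers

/-- **Caristi–Penot theorem in reflexive Banach spaces (weakly compact values).**
Let `X` be a reflexive Banach space with a partial order whose order intervals
are closed and convex and whose norm distance is left-monotone, and let `M` be
a nonempty bounded closed subset of `X`. Let `φ : M → ℝ₊` be lower weakly
semi-continuous and `T : M → WK(M)` a set-valued map with nonempty weakly
compact values in `M` such that for every `x ∈ M` there exists `a ∈ T x` with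
`x ⪯ a` and `‖x - a‖ ≤ φ x - inf φ(T x ∩ [x,a])`. Then `T` has a fixed point
in `M`. -/
theorem caristi_penot_reflexive_weakly_compact {X : Type*}
    [NormedAddCommGroup X] [NormedSpace ℝ X] [CompleteSpace X] [PartialOrder X]
    (h_reflexive : Function.Surjective (NormedSpace.inclusionInDoubleDual ℝ X))
    (h_Ici_closed : ∀ a : X, IsClosed (Set.Ici a))
    (h_Iic_closed : ∀ a : X, IsClosed (Set.Iic a))
    (h_Ici_convex : ∀ a : X, Convex ℝ (Set.Ici a))
    (h_Iic_convex : ∀ a : X, Convex ℝ (Set.Iic a))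
    (h_left_monotone : ∀ x y z : X, x ≤ y → y ≤ z → ‖x - y‖ ≤ ‖x - z‖)
    (M : Set X) (hM_ne : M.Nonempty) (hM_bdd : Bornology.IsBounded M)
    (hM_closed : IsClosed M)
    (φ : X → ℝ) (hφ_nonneg : ∀ x ∈ M, 0 ≤ φ x)
    (hφ_lwsc : ∀ (x : ℕ → X), (∀ n, x n ∈ M) → ∀ a ∈ M,
      (∀ f : X →L[ℝ] ℝ, Tendsto (fun n => f (x n)) atTop (𝓝 (f a))) →
      φ a ≤ liminf (fun n => φ (x n)) atTop)
    (T : X → Set X)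
    (hT_sub : ∀ x ∈ M, T x ⊆ M)
    (hT_ne : ∀ x ∈ M, (T x).Nonempty)
    (hT_wcpt : ∀ x ∈ M, IsCompact ((toWeakSpace ℝ X) '' (T x)))
    (hcaristi : ∀ x ∈ M, ∃ a ∈ T x, x ≤ a ∧
      ‖x - a‖ ≤ φ x - sInf (φ '' (T x ∩ Set.Icc x a))) :
    ∃ x ∈ M, x ∈ T x := by
  classical
  obtain ⟨x₀, hx₀⟩ := hM_ne
  -- the Caristi–Brøndsted order on M
  set r : {u : X // u ∈ M} → {u : X // u ∈ M} → Prop :=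
    fun p q => p.1 ≤ q.1 ∧ ‖p.1 - q.1‖ ≤ φ p.1 - φ q.1 with hr
  have hrefl : ∀ p, r p p := fun p => ⟨le_refl _, by simp⟩
  have htrans : ∀ {p q s}, r p q → r q s → r p s := by
    rintro p q s ⟨h1, h2⟩ ⟨h3, h4⟩
    refine ⟨h1.trans h3, ?_⟩
    have htri : ‖p.1 - s.1‖ ≤ ‖p.1 - q.1‖ + ‖q.1 - s.1‖ := by
      have := dist_triangle p.1 q.1 s.1
      simpa [dist_eq_norm] using this
    linarith
  have hφmono : ∀ {p q}, r p q → φ q.1 ≤ φ p.1 := by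
    rintro p q ⟨-, h2⟩
    have := norm_nonneg (p.1 - q.1)
    linarith
  -- every chain has an upper bound
  have hchain : ∀ c, IsChain r c → ∃ ub, ∀ p ∈ c, r p ub := by
    intro c hc
    rcases Set.eq_empty_or_nonempty c with rfl | ⟨p₀, hp₀⟩
    · exact ⟨⟨x₀, hx₀⟩, by simp⟩
    set s := (fun p : {u : X // u ∈ M} => φ p.1) '' c with hs
    have hs_ne : s.Nonempty := ⟨_, p₀, hp₀, rfl⟩
    have hs_bdd : BddBelow s := by
      refine ⟨0, ?_⟩
      rintro y ⟨p, hp, rfl⟩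
      exact hφ_nonneg p.1 p.2
    set L := sInf s with hL
    have hLle : ∀ p ∈ c, L ≤ φ p.1 := fun p hp => csInf_le hs_bdd ⟨p, hp, rfl⟩
    -- nearly optimal successor inside the chain
    have key : ∀ (n : ℕ) (p : {u : X // u ∈ M}), p ∈ c →
        ∃ q, q ∈ c ∧ r p q ∧ φ q.1 < L + 1/(n+1) := by
      intro n p hp
      have hlt : L < L + 1/(n+1) := by
        have : (0:ℝ) < 1/(n+1) := by positivity
        linarith
      obtain ⟨y, ⟨v, hv, rfl⟩, hy⟩ := exists_lt_of_csInf_lt hs_ne hlt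
      by_cases hpv : p = v
      · exact ⟨v, hv, hpv ▸ hrefl p, hy⟩
      · rcases hc hp hv hpv with h | h
        · exact ⟨v, hv, h, hy⟩
        · exact ⟨p, hp, hrefl p, lt_of_le_of_lt (hφmono h) hy⟩
    choose! g hg1 hg2 hg3 using key
    set u : ℕ → {u : X // u ∈ M} :=
      fun n => Nat.rec (g 0 p₀) (fun n q => g (n+1) q) n with hu
    have humem : ∀ n, u n ∈ c := by
      intro n
      induction n with
      | zero => exact hg1 0 p₀ hp₀
      | succ n ih => exact hg1 (n+1) (u n) ih
    have huφ : ∀ n, φ (u n).1 < L + 1/(n+1) := by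
      intro n
      cases n with
      | zero => exact hg3 0 p₀ hp₀
      | succ n => exact hg3 (n+1) (u n) (humem n)
    have hustep : ∀ n, r (u n) (u (n+1)) := fun n => hg2 (n+1) (u n) (humem n)
    have humono : ∀ m n, m ≤ n → r (u m) (u n) := by
      intro m n hmn
      induction n with
      | zero => simpa [Nat.le_zero.mp hmn] using hrefl (u 0)
      | succ n ih =>
        rcases Nat.lt_or_ge m (n+1) with h | h
        · exact htrans (ih (Nat.lt_succ_iff.mp h)) (hustep n)
        · have : m = n + 1 := le_antisymm hmn h
          simpa [this] using hrefl (u (n+1))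
    -- the sequence is Cauchy
    have hucauchy : CauchySeq (fun n => (u n).1) := by
      rw [Metric.cauchySeq_iff']
      intro ε hε
      obtain ⟨N, hN⟩ := exists_nat_one_div_lt hε
      refine ⟨N, fun n hn => ?_⟩
      have h1 : ‖(u N).1 - (u n).1‖ ≤ φ (u N).1 - φ (u n).1 := (humono N n hn).2
      have h2 : L ≤ φ (u n).1 := hLle _ (humem n)
      have h3 : φ (u N).1 < L + 1/(N+1) := huφ N
      rw [dist_eq_norm, norm_sub_rev]
      push_cast at hN ⊢
      linarith
    obtain ⟨xs, hxst⟩ := cauchySeq_tendsto_of_complete hucauchy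
    have hxsM : xs ∈ M :=
      hM_closed.mem_of_tendsto hxst (Eventually.of_forall fun n => (u n).2)
    -- φ xs ≤ L
    have hφul : Tendsto (fun n => φ (u n).1) atTop (𝓝 L) := by
      have hup : Tendsto (fun n : ℕ => L + 1/(n+1)) atTop (𝓝 L) := by
        have h2 := (tendsto_const_nhds (x := L) (f := (atTop : Filter ℕ))).add
          tendsto_one_div_add_atTop_nhds_zero_nat
        simpa using h2
      exact tendsto_of_tendsto_of_tendsto_of_le_of_le tendsto_const_nhds hup
        (fun n => hLle _ (humem n)) (fun n => (huφ n).le)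
    have hφxs : φ xs ≤ L := by
      have h := hφ_lwsc (fun n => (u n).1) (fun n => (u n).2) xs hxsM
        (fun f => (f.continuous.tendsto xs).comp hxst)
      rwa [hφul.liminf_eq] at h
    set xb : {u : X // u ∈ M} := ⟨xs, hxsM⟩ with hxb
    -- xb is an upper bound of the sequence
    have hub_u : ∀ n, r (u n) xb := by
      intro n
      constructor
      · refine (h_Ici_closed (u n).1).mem_of_tendsto hxst ?_
        filter_upwards [eventually_ge_atTop n] with m hm
        exact (humono n m hm).1
      · have hbound : ∀ m, m ≥ n → ‖(u n).1 - (u m).1‖ ≤ φ (u n).1 - L := by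
          intro m hm
          have := (humono n m hm).2
          have h2 := hLle _ (humem m)
          linarith
        have htn : Tendsto (fun m => ‖(u n).1 - (u m).1‖) atTop
            (𝓝 ‖(u n).1 - xs‖) := (tendsto_const_nhds.sub hxst).norm
        have := le_of_tendsto htn (eventually_atTop.mpr ⟨n, hbound⟩)
        simpa using le_trans this (by linarith)
    -- xb is an upper bound of the chain
    refine ⟨xb, fun p hp => ?_⟩
    by_cases hcase : ∃ n, r p (u n)
    · obtain ⟨n, hn⟩ := hcase
      exact htrans hn (hub_u n)
    · push_neg at hcase
      have hforall : ∀ n, r (u n) p := by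
        intro n
        by_cases hpe : p = u n
        · exact absurd (hpe ▸ hrefl p) (hcase n)
        · rcases hc hp (humem n) hpe with h | h
          · exact absurd h (hcase n)
          · exact h
      have hdist : ∀ n, dist (u n).1 p.1 ≤ 1/(n+1) := by
        intro n
        have h1 := (hforall n).2
        have h2 : L ≤ φ p.1 := hLle _ hp
        have h3 := huφ n
        rw [dist_eq_norm]
        linarith
      have htp : Tendsto (fun n => (u n).1) atTop (𝓝 p.1) := by
        rw [tendsto_iff_dist_tendsto_zero]
        exact squeeze_zero (fun n => dist_nonneg) hdist
          tendsto_one_div_add_atTop_nhds_zero_nat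
      have hpx : p.1 = xs := tendsto_nhds_unique htp hxst
      have : p = xb := Subtype.ext hpx
      rw [this]
      exact hrefl xb
  -- Zorn
  obtain ⟨m, hm⟩ := exists_maximal_of_chains_bounded hchain (fun {a b c} => htrans)
  obtain ⟨b, hbT, hmb, hnb⟩ := exists_exact_successor h_Ici_closed h_Iic_closed
    h_Ici_convex h_Iic_convex h_left_monotone M φ hφ_nonneg hφ_lwsc T hT_sub
    hT_wcpt hcaristi m.2
  have hbM : b ∈ M := hT_sub m.1 m.2 hbT
  have h2 := hm ⟨b, hbM⟩ ⟨hmb, hnb⟩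
  have hbm : b = m.1 := le_antisymm h2.1 hmb
  exact ⟨m.1, m.2, hbm ▸ hbT⟩
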